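/- arXiv:1210.3083 — 4 statements merged into one kernel-verified Lean document; each statement's English description precedes it below -/
import Mathlib

section
/- There exists a universal constant C > 0 such that for every integer m ≥ 0, ∑_{p=0}^{m} [p]_2^{-1} [m−p]_2^{-1} ≤ C [m]_2^{-1}. Equivalently, (1/m!) ∑_{p=0}^{m} binom(m,p) (p−2)! (m−p−2)! ≤ C (m−2)!/m!, where n! := 1 whenever n ≤ 0. -/
/-- `br m = max m 1`, the bracket convention `[m]` from the paper, as a real number. -/
noncomputable def br (m : ℤ) : ℝ := max (m : ℝ) 1

/-- `brf m k = [m]_k = [m]·[m-1]⋯[m-k+1]`, the modified falling factorial. -/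
noncomputable def brf (m : ℤ) (k : ℕ) : ℝ := ∏ i ∈ Finset.range k, br (m - i)



lemma one_le_br (m : ℤ) : 1 ≤ br m := le_max_right _ _

lemma br_pos (m : ℤ) : 0 < br m := lt_of_lt_of_le one_pos (one_le_br m)

lemma brf_two (m : ℤ) : brf m 2 = br m * br (m - 1) := by
  simp [brf, Finset.prod_range_succ]

lemma one_le_brf_two (m : ℤ) : 1 ≤ brf m 2 := by
  rw [brf_two]
  calc (1:ℝ) = 1 * 1 := by ring
  _ ≤ br m * br (m-1) := by
      exact mul_le_mul (one_le_br m) (one_le_br (m-1)) zero_le_one (br_pos m).le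

lemma brf_two_pos (m : ℤ) : 0 < brf m 2 := lt_of_lt_of_le one_pos (one_le_brf_two m)

lemma br_natCast (p : ℕ) (hp : 1 ≤ p) : br (p : ℤ) = p := by
  unfold br
  push_cast
  exact max_eq_left (by exact_mod_cast hp)

lemma brf_nat (k : ℕ) : brf ((k:ℤ)+2) 2 = ((k:ℝ)+2) * ((k:ℝ)+1) := by
  rw [brf_two]
  have h1 : br ((k:ℤ)+2) = ((k:ℕ)+2 : ℕ) := by
    rw [show ((k:ℤ)+2) = (((k+2:ℕ)):ℤ) by push_cast; ring]
    exact br_natCast _ (by omega)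
  have h2 : br ((k:ℤ)+2-1) = ((k:ℕ)+1 : ℕ) := by
    rw [show ((k:ℤ)+2-1) = (((k+1:ℕ)):ℤ) by push_cast; ring]
    exact br_natCast _ (by omega)
  rw [h1, h2]; push_cast; ring

lemma brf_eq_factorial (p : ℕ) :
    brf (p : ℤ) 2 = (Nat.factorial p : ℝ) / (Nat.factorial (p - 2) : ℝ) := by
  match p with
  | 0 => simp [brf_two, br, Nat.factorial]
  | 1 => simp [brf_two, br, Nat.factorial]
  | (k+2) =>
    have : ((k:ℤ)+2) = (((k+2:ℕ)):ℤ) := by push_cast; ring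
    rw [show ((k+2:ℕ):ℤ) = (k:ℤ)+2 by push_cast; ring, brf_nat]
    have : Nat.factorial (k+2) = (k+2)*(k+1)*Nat.factorial k := by
      simp [Nat.factorial]
      try ring
    rw [show k+2-2 = k by omega, this]
    have hk : (Nat.factorial k : ℝ) ≠ 0 := by positivity
    push_cast
    field_simp
    try ring

lemma sum_inv_le (m : ℕ) :
    ∑ p ∈ Finset.range (m+1), (brf (p:ℤ) 2)⁻¹ ≤ 3 - (br (m:ℤ))⁻¹ := by
  induction m with
  | zero => simp [brf_two, br]; norm_num
  | succ k ih =>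
    rw [Finset.sum_range_succ]
    match k with
    | 0 =>
      norm_num [brf_two, br, Finset.sum_range_succ]
    | j+1 =>
      have hb : br ((j:ℤ)+1) = ((j:ℝ)+1) := by
        have := br_natCast (j+1) (by omega); push_cast at this ⊢; linarith
      have hb2 : br ((j:ℤ)+2) = ((j:ℝ)+2) := by
        have := br_natCast (j+2) (by omega); push_cast at this ⊢; linarith
      have hbrf : brf ((j:ℤ)+2) 2 = ((j:ℝ)+2)*((j:ℝ)+1) := brf_nat j
      have hx : (0:ℝ) < (j:ℝ)+1 := by positivity
      have hy : (0:ℝ) < (j:ℝ)+2 := by positivity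
      push_cast at ih ⊢
      rw [show ((j:ℤ)+1+1) = (j:ℤ)+2 from by ring, hbrf, hb2]
      rw [hb] at ih
      have key : ((j:ℝ)+2)⁻¹ + (((j:ℝ)+2)*((j:ℝ)+1))⁻¹ = ((j:ℝ)+1)⁻¹ := by
        rw [mul_inv]
        field_simp
        ring
      linarith

lemma brf_double {m q : ℕ} (h : m ≤ 2*q) : brf (m:ℤ) 2 ≤ 8 * brf (q:ℤ) 2 := by
  rw [brf_two, brf_two]
  have h1 : br (m:ℤ) ≤ 2 * br (q:ℤ) := by
    unfold br
    push_cast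
    rcases le_or_gt (q:ℝ) 1 with hq | hq
    · have hq' : q ≤ 1 := by exact_mod_cast hq
      have : (m:ℝ) ≤ 2 := by exact_mod_cast (show m ≤ 2 by omega)
      rw [max_eq_right hq]
      exact max_le (by linarith) (by norm_num)
    · rw [max_eq_left hq.le]
      exact max_le (by exact_mod_cast le_trans (Nat.cast_le.2 h) (le_of_eq (by push_cast; ring))) (by linarith)
  have h2 : br ((m:ℤ)-1) ≤ 4 * br ((q:ℤ)-1) := by
    unfold br
    push_cast
    have hmax : (1:ℝ) ≤ max ((q:ℝ)-1) 1 := le_max_right _ _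
    rcases le_or_gt 2 q with hq | hq
    · have hq1 : (1:ℝ) ≤ (q:ℝ)-1 := by
        have : (2:ℝ) ≤ q := by exact_mod_cast hq
        linarith
      rw [max_eq_left hq1]
      refine max_le ?_ (by linarith)
      have hm : (m:ℝ) ≤ 2*(q:ℝ) := by exact_mod_cast h
      have : (2:ℝ) ≤ q := by exact_mod_cast hq
      nlinarith
    · have hm : (m:ℝ) ≤ 2 := by
        have : m ≤ 2 := by omega
        exact_mod_cast this
      exact max_le (by linarith) (by linarith)
  have p1 := br_pos (m:ℤ)
  have p2 := br_pos ((q:ℤ)-1)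
  have p3 := br_pos ((m:ℤ)-1)
  have p4 := br_pos (q:ℤ)
  nlinarith

/-- there is a universal constant `C > 0` such that for every `m ≥ 0`,
`∑_{p=0}^m [p]_2⁻¹ [m-p]_2⁻¹ ≤ C [m]_2⁻¹`; equivalently,
`(1/m!) ∑_{p=0}^m binom(m,p) (p-2)! (m-p-2)! ≤ C (m-2)!/m!`
(factorial convention `n! = 1` for `n ≤ 0`, i.e. truncated subtraction in `ℕ`). -/
theorem sum_inv_brf_two_convolution :
    ∃ C : ℝ, 0 < C ∧ ∀ m : ℕ,
      (∑ p ∈ Finset.range (m + 1), (brf p 2)⁻¹ * (brf ((m : ℤ) - p) 2)⁻¹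
        ≤ C * (brf m 2)⁻¹) ∧
      ((1 / (Nat.factorial m : ℝ)) *
          ∑ p ∈ Finset.range (m + 1),
            (Nat.choose m p : ℝ) * (Nat.factorial (p - 2)) * (Nat.factorial (m - p - 2))
        ≤ C * (Nat.factorial (m - 2) : ℝ) / (Nat.factorial m : ℝ)) := by
  refine ⟨48, by norm_num, fun m => ?_⟩
  set a : ℕ → ℝ := fun p => (brf (p:ℤ) 2)⁻¹ with ha
  have apos : ∀ p, 0 < a p := fun p => inv_pos.2 (brf_two_pos _)
  have hsum : ∑ p ∈ Finset.range (m+1), a p ≤ 3 := by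
    have h1 := sum_inv_le m
    have h2 : (0:ℝ) < (br (m:ℤ))⁻¹ := inv_pos.2 (br_pos _)
    simp only [ha]
    linarith
  have hmain : ∀ q : ℕ, m ≤ 2*q → a q ≤ 8 * a m := by
    intro q hq
    have hd := brf_double hq
    have h1 : (brf (q:ℤ) 2)⁻¹ ≤ (brf (m:ℤ) 2 / 8)⁻¹ :=
      inv_anti₀ (div_pos (brf_two_pos _) (by norm_num)) (by linarith)
    calc a q ≤ (brf (m:ℤ) 2 / 8)⁻¹ := h1
    _ = 8 * a m := by rw [inv_div, div_eq_mul_inv]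
  have term : ∀ p ∈ Finset.range (m+1), a p * a (m-p) ≤ 8 * a m * (a p + a (m-p)) := by
    intro p hp
    have hpm : p ≤ m := by
      have := Finset.mem_range.1 hp; omega
    have hcases : m ≤ 2*p ∨ m ≤ 2*(m-p) := by omega
    rcases hcases with h | h
    · have h8 := hmain p h
      nlinarith [apos p, apos (m-p), apos m, mul_pos (apos m) (apos (m-p))]
    · have h8 := hmain (m-p) h
      nlinarith [apos p, apos (m-p), apos m, mul_pos (apos m) (apos p)]
  have hreflect : ∑ p ∈ Finset.range (m+1), a (m-p) = ∑ p ∈ Finset.range (m+1), a p := by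
    rw [← Finset.sum_range_reflect a (m+1)]
    apply Finset.sum_congr rfl
    intro j hj
    congr 1
  have key1 : ∑ p ∈ Finset.range (m+1), a p * a (m-p) ≤ 48 * a m := by
    calc ∑ p ∈ Finset.range (m+1), a p * a (m-p)
        ≤ ∑ p ∈ Finset.range (m+1), 8 * a m * (a p + a (m-p)) := Finset.sum_le_sum term
    _ = 8 * a m * (∑ p ∈ Finset.range (m+1), a p + ∑ p ∈ Finset.range (m+1), a (m-p)) := by
        rw [← Finset.mul_sum, Finset.sum_add_distrib]
    _ = 8 * a m * (∑ p ∈ Finset.range (m+1), a p + ∑ p ∈ Finset.range (m+1), a p) := by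
        rw [hreflect]
    _ ≤ 8 * a m * (3 + 3) := by
        refine mul_le_mul_of_nonneg_left (by linarith) ?_
        nlinarith [apos m]
    _ = 48 * a m := by ring
  constructor
  · have hcast : ∀ p ∈ Finset.range (m+1),
        (brf (p:ℤ) 2)⁻¹ * (brf ((m:ℤ)-p) 2)⁻¹ = a p * a (m - p) := by
      intro p hp
      have hpm : p ≤ m := by have := Finset.mem_range.1 hp; omega
      have hcp : ((m - p : ℕ) : ℤ) = (m:ℤ) - p := by omega
      simp only [ha, hcp]
    rw [Finset.sum_congr rfl hcast]
    exact key1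
  · have ham : a m = ((Nat.factorial (m-2) : ℝ)) / (Nat.factorial m : ℝ) := by
      simp only [ha, brf_eq_factorial, inv_div]
    have hterm2 : ∀ p ∈ Finset.range (m+1),
        (1/(Nat.factorial m :ℝ)) * ((Nat.choose m p : ℝ) * (Nat.factorial (p-2)) * (Nat.factorial (m-p-2)))
          = a p * a (m-p) := by
      intro p hp
      have hpm : p ≤ m := by have := Finset.mem_range.1 hp; omega
      have hch : ((Nat.choose m p : ℝ)) * (Nat.factorial p) * (Nat.factorial (m-p)) = Nat.factorial m := by
        exact_mod_cast congrArg (Nat.cast : ℕ → ℝ) (Nat.choose_mul_factorial_mul_factorial hpm)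
      have hap : a p = ((Nat.factorial (p-2) : ℝ)) / (Nat.factorial p : ℝ) := by
        simp only [ha, brf_eq_factorial, inv_div]
      have hamp : a (m-p) = ((Nat.factorial (m-p-2) : ℝ)) / (Nat.factorial (m-p) : ℝ) := by
        simp only [ha, brf_eq_factorial, inv_div]
      have f1 : (Nat.factorial m : ℝ) ≠ 0 := Nat.cast_ne_zero.2 (Nat.factorial_ne_zero _)
      have f2 : (Nat.factorial p : ℝ) ≠ 0 := Nat.cast_ne_zero.2 (Nat.factorial_ne_zero _)
      have f3 : (Nat.factorial (m-p) : ℝ) ≠ 0 := Nat.cast_ne_zero.2 (Nat.factorial_ne_zero _)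
      rw [hap, hamp]
      field_simp
      linear_combination hch
    rw [Finset.mul_sum, Finset.sum_congr rfl hterm2]
    rw [show (48:ℝ) * (Nat.factorial (m-2) : ℝ) / (Nat.factorial m : ℝ) = 48 * a m by
      rw [ham]; ring]
    exact key1
end

section
/- There exists a universal constant C > 0 with the following property. Let θ > 0, and let (U_{k,l}), (V_{k,l}), (W_{k,l}) be families of nonnegative real numbers indexed by pairs (k,l) of nonnegative integers, satisfying the Leibniz-type bound W_{k,l} ≤ ∑_{p=0}^{k} ∑_{q=0}^{l} binom(k,p) binom(l,q) U_{p,q} V_{k−p,l−q} for all k, l. Define u_{k,l} := a_{k,l}^2 θ^{k+2l} U_{k,l}^2, v_{k,l} := a_{k,l}^2 θ^{k+2l} V_{k,l}^2, and w_{k,l} := a_{k,l}^2 θ^{k+2l} W_{k,l}^2. Then for every nonnegative integer N, ∑_{0 ≤ k+l ≤ N} w_{k,l} ≤ C ( ∑_{0 ≤ k+l ≤ N} u_{k,l} ) ( ∑_{0 ≤ k+l ≤ N} v_{k,l} ). -/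
/-- The weights `a_{k,l} = 1/((k-2)!·(l-2)!)` with the convention `n! = 1` for `n ≤ 0`
(truncated subtraction in `ℕ`). -/
noncomputable def wt (k l : ℕ) : ℝ :=
  ((Nat.factorial (k - 2) : ℝ) * (Nat.factorial (l - 2) : ℝ))⁻¹

/-- Sum of `f k l` over all pairs `(k,l)` of nonnegative integers with `k + l ≤ N`. -/
noncomputable def sumUpTo (N : ℕ) (f : ℕ → ℕ → ℝ) : ℝ :=
  ∑ k ∈ Finset.range (N + 1), ∑ l ∈ Finset.range (N + 1 - k), f k l

open Finset

lemma wt_pos (k l : ℕ) : 0 < wt k l := by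
  unfold wt
  have h1 := (k-2).factorial_pos
  have h2 := (l-2).factorial_pos
  positivity

/-- The triangle `{(k,l) : k + l ≤ N}` as a finset. -/
def TT (N : ℕ) : Finset (ℕ × ℕ) :=
  (Finset.range (N+1) ×ˢ Finset.range (N+1)).filter (fun x => x.1 + x.2 ≤ N)

lemma sumUpTo_eq (N : ℕ) (f : ℕ → ℕ → ℝ) : sumUpTo N f = ∑ x ∈ TT N, f x.1 x.2 := by
  unfold sumUpTo TT
  rw [Finset.sum_filter, Finset.sum_product]
  apply sum_congr rfl
  intro k hk
  have hk' : k ≤ N := Nat.lt_succ_iff.mp (mem_range.mp hk)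
  rw [← Finset.sum_filter]
  congr 1
  ext l
  simp only [mem_filter, mem_range]
  omega

lemma rearr (N : ℕ) (u v : ℕ → ℕ → ℝ) (hu : ∀ p q, 0 ≤ u p q) (hv : ∀ p q, 0 ≤ v p q) :
    ∑ x ∈ TT N, ∑ p ∈ range (x.1+1), ∑ q ∈ range (x.2+1), u p q * v (x.1-p) (x.2-q)
      ≤ (∑ x ∈ TT N, u x.1 x.2) * (∑ x ∈ TT N, v x.1 x.2) := by
  set S : Finset ((_ : ℕ × ℕ) × ℕ × ℕ) :=
    (TT N).sigma (fun x => range (x.1+1) ×ˢ range (x.2+1)) with hS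
  set g : (ℕ × ℕ) × ℕ × ℕ → ℝ := fun z => u z.1.1 z.1.2 * v z.2.1 z.2.2 with hg
  set i : ((_ : ℕ × ℕ) × ℕ × ℕ) → (ℕ × ℕ) × ℕ × ℕ :=
    fun y => ((y.2.1, y.2.2), (y.1.1 - y.2.1, y.1.2 - y.2.2)) with hi
  have stepA : ∑ x ∈ TT N, ∑ p ∈ range (x.1+1), ∑ q ∈ range (x.2+1),
      u p q * v (x.1-p) (x.2-q) = ∑ y ∈ S, g (i y) := by
    rw [hS, Finset.sum_sigma]
    apply sum_congr rfl
    intro x _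
    rw [Finset.sum_product]
  have hinj : ∀ y1 ∈ S, ∀ y2 ∈ S, i y1 = i y2 → y1 = y2 := by
    rintro ⟨⟨k, l⟩, p, q⟩ h1 ⟨⟨k', l'⟩, p', q'⟩ h2 heq
    simp only [hS, Finset.mem_sigma, Finset.mem_product, Finset.mem_range] at h1 h2
    simp only [hi, Prod.mk.injEq] at heq
    obtain ⟨⟨hp, hq⟩, hk, hl⟩ := heq
    obtain ⟨hk', hl', hp', hq'⟩ : k = k' ∧ l = l' ∧ p = p' ∧ q = q' := by omega
    subst hk'; subst hl'; subst hp'; subst hq'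
    rfl
  have stepC : ∑ y ∈ S, g (i y) = ∑ z ∈ S.image i, g z := (Finset.sum_image hinj).symm
  have hsub : S.image i ⊆ TT N ×ˢ TT N := by
    intro z hz
    simp only [Finset.mem_image] at hz
    obtain ⟨⟨⟨k, l⟩, p, q⟩, hy, rfl⟩ := hz
    simp only [hS, Finset.mem_sigma, Finset.mem_product, Finset.mem_range, TT,
      Finset.mem_filter, hi] at hy ⊢
    omega
  have stepD : ∑ z ∈ S.image i, g z ≤ ∑ z ∈ TT N ×ˢ TT N, g z := by
    apply Finset.sum_le_sum_of_subset_of_nonneg hsub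
    intro z _ _
    exact mul_nonneg (hu _ _) (hv _ _)
  have stepE : ∑ z ∈ TT N ×ˢ TT N, g z
      = (∑ x ∈ TT N, u x.1 x.2) * (∑ x ∈ TT N, v x.1 x.2) := by
    rw [Finset.sum_mul_sum, Finset.sum_product]
  rw [stepA, stepC, ← stepE]
  exact stepD

noncomputable def bb (k p : ℕ) : ℝ :=
  (k.choose p : ℝ) * (Nat.factorial (p - 2) : ℝ) * (Nat.factorial (k - p - 2) : ℝ) /
    (Nat.factorial (k - 2) : ℝ)

noncomputable def dd (p : ℕ) : ℝ := 6 / (((p : ℝ) + 1) * ((p : ℝ) + 2))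

lemma dd_nonneg (p : ℕ) : 0 ≤ dd p := by unfold dd; positivity

lemma dd_le_three (p : ℕ) : dd p ≤ 3 := by
  unfold dd
  rw [div_le_iff₀ (by positivity)]
  have h : (0:ℝ) ≤ (p:ℝ) := Nat.cast_nonneg p
  nlinarith

lemma bb_nonneg (k p : ℕ) : 0 ≤ bb k p := by unfold bb; positivity

lemma sum_dd_le (n : ℕ) : ∑ p ∈ range n, dd p ≤ 6 := by
  have key : ∑ p ∈ range n, dd p
      = (fun i : ℕ => (-6:ℝ)/((i:ℝ)+1)) n - (fun i : ℕ => (-6:ℝ)/((i:ℝ)+1)) 0 := by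
    rw [← Finset.sum_range_sub (fun i : ℕ => (-6:ℝ)/((i:ℝ)+1)) n]
    apply sum_congr rfl
    intro p _
    have h1 : ((p:ℝ)+1) ≠ 0 := by positivity
    have h2 : ((p:ℝ)+2) ≠ 0 := by positivity
    unfold dd
    push_cast
    field_simp
    ring
  rw [key]
  simp only
  have : (-6:ℝ)/((n:ℝ)+1) ≤ 0 := by
    apply div_nonpos_of_nonpos_of_nonneg <;> [norm_num; positivity]
  norm_num
  linarith

lemma dd0 : dd 0 = 3 := by unfold dd; norm_num
lemma dd1 : dd 1 = 1 := by unfold dd; norm_num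

lemma bb_le (k p : ℕ) (hpk : p ≤ k) : bb k p ≤ 3 * (dd p + dd (k - p)) := by
  obtain ⟨m, rfl⟩ : ∃ m, k = p + m := ⟨k - p, by omega⟩
  rw [show p + m - p = m by omega]
  have hfpos : ∀ n : ℕ, (0:ℝ) < (Nat.factorial n : ℝ) := fun n => by
    exact_mod_cast n.factorial_pos
  match p, m with
  | 0, 0 => simp [bb, dd]; norm_num
  | 0, 1 => simp [bb, dd]; norm_num
  | 1, 0 => simp [bb, dd]; norm_num
  | 1, 1 => simp [bb, dd, Nat.factorial]; norm_num
  | 0, (c+2) =>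
    have : bb (0 + (c+2)) 0 = 1 := by
      unfold bb
      rw [show (0 + (c+2)) = c + 2 by omega]
      simp [Nat.choose_zero_right]
      exact Nat.factorial_ne_zero c
    rw [this]
    have := dd_nonneg (c+2)
    rw [dd0]
    linarith
  | 1, (c+2) =>
    have hb : bb (1 + (c+2)) 1 = ((c:ℝ)+3)/((c:ℝ)+1) := by
      unfold bb
      rw [show (1 + (c+2)) = c + 3 by omega]
      rw [Nat.choose_one_right]
      rw [show (1:ℕ) - 2 = 0 by omega, show c + 3 - 1 - 2 = c by omega,
        show c + 3 - 2 = c + 1 by omega]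
      rw [Nat.factorial_succ]
      push_cast
      rw [Nat.factorial_zero]
      have h1 := hfpos c
      field_simp
      ring
    rw [hb, dd1]
    have h2 := dd_nonneg (c+2)
    have h3 : (0:ℝ) < (c:ℝ) + 1 := by positivity
    rw [div_le_iff₀ h3]
    nlinarith
  | (a+2), 0 =>
    have : bb ((a+2) + 0) (a+2) = 1 := by
      unfold bb
      rw [show (a+2) + 0 = a + 2 by omega]
      simp [Nat.choose_self]
      exact Nat.factorial_ne_zero a
    rw [this]
    have := dd_nonneg (a+2)
    rw [dd0]
    linarith
  | (a+2), 1 =>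
    have hb : bb ((a+2) + 1) (a+2) = ((a:ℝ)+3)/((a:ℝ)+1) := by
      unfold bb
      rw [show (a+2) + 1 = a + 3 by omega]
      rw [show (a+3).choose (a+2) = (a+3).choose 1 by
        rw [← Nat.choose_symm (by omega)]; congr 1; omega]
      rw [Nat.choose_one_right]
      rw [show a + 2 - 2 = a by omega, show a + 3 - (a+2) - 2 = 0 by omega,
        show a + 3 - 2 = a + 1 by omega]
      rw [Nat.factorial_succ]
      push_cast
      rw [Nat.factorial_zero]
      have h1 := hfpos a
      field_simp
      ring
    rw [hb, dd1]
    have h2 := dd_nonneg (a+2)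
    have h3 : (0:ℝ) < (a:ℝ) + 1 := by positivity
    rw [div_le_iff₀ h3]
    nlinarith
  | (a+2), (c+2) =>
    -- interior case
    have e1 : ((a+c+4).choose (a+2)) * (a+2).factorial * (c+2).factorial
        = (a+c+4).factorial := by
      have := Nat.choose_mul_factorial_mul_factorial (show a+2 ≤ a+c+4 by omega)
      rwa [show a+c+4 - (a+2) = c+2 by omega] at this
    have key : bb ((a+2) + (c+2)) (a+2)
        = (((a:ℝ)+(c:ℝ)+4)*((a:ℝ)+(c:ℝ)+3))
          / ((((a:ℝ)+1)*((a:ℝ)+2)) * (((c:ℝ)+1)*((c:ℝ)+2))) := by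
      unfold bb
      rw [show (a+2) + (c+2) = a+c+4 by omega]
      rw [show a + 2 - 2 = a by omega, show a+c+4 - (a+2) - 2 = c by omega,
        show a+c+4 - 2 = a+c+2 by omega]
      rw [div_eq_div_iff (hfpos _).ne' (by positivity : ((((a:ℝ)+1)*((a:ℝ)+2)) * (((c:ℝ)+1)*((c:ℝ)+2)) : ℝ) ≠ 0)]
      have E1 : ((a+c+4).choose (a+2) : ℝ) * ((a+2).factorial : ℝ) * ((c+2).factorial : ℝ)
          = ((a+c+4).factorial : ℝ) := by exact_mod_cast congrArg (fun n : ℕ => (n:ℝ)) e1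
      have E2 : ((a+2).factorial : ℝ) = ((a:ℝ)+2)*(((a:ℝ)+1)*(a.factorial : ℝ)) := by
        rw [show a + 2 = (a+1) + 1 by omega, Nat.factorial_succ, Nat.factorial_succ]
        push_cast; ring
      have E3 : ((c+2).factorial : ℝ) = ((c:ℝ)+2)*(((c:ℝ)+1)*(c.factorial : ℝ)) := by
        rw [show c + 2 = (c+1) + 1 by omega, Nat.factorial_succ, Nat.factorial_succ]
        push_cast; ring
      have E4 : ((a+c+4).factorial : ℝ)
          = ((a:ℝ)+(c:ℝ)+4)*(((a:ℝ)+(c:ℝ)+3)*((a+c+2).factorial : ℝ)) := by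
        rw [show a + c + 4 = (a+c+3) + 1 by omega, Nat.factorial_succ,
          show a + c + 3 = (a+c+2) + 1 by omega, Nat.factorial_succ]
        push_cast; ring
      rw [E2, E3, E4] at E1
      linear_combination E1
    rw [key]
    have ha1 : (0:ℝ) < ((a:ℝ)+1)*((a:ℝ)+2) := by positivity
    have hc1 : (0:ℝ) < ((c:ℝ)+1)*((c:ℝ)+2) := by positivity
    have step1 : (((a:ℝ)+(c:ℝ)+4)*((a:ℝ)+(c:ℝ)+3))
          / ((((a:ℝ)+1)*((a:ℝ)+2)) * (((c:ℝ)+1)*((c:ℝ)+2)))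
        ≤ 3 * (1/(((a:ℝ)+1)*((a:ℝ)+2)) + 1/(((c:ℝ)+1)*((c:ℝ)+2))) := by
      rw [div_le_iff₀ (by positivity)]
      have ha : (0:ℝ) ≤ (a:ℝ) := Nat.cast_nonneg a
      have hc : (0:ℝ) ≤ (c:ℝ) := Nat.cast_nonneg c
      have expand : 3 * (1/(((a:ℝ)+1)*((a:ℝ)+2)) + 1/(((c:ℝ)+1)*((c:ℝ)+2)))
          * ((((a:ℝ)+1)*((a:ℝ)+2)) * (((c:ℝ)+1)*((c:ℝ)+2)))
          = 3 * ((((c:ℝ)+1)*((c:ℝ)+2)) + (((a:ℝ)+1)*((a:ℝ)+2))) := by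
        field_simp
      rw [expand]
      nlinarith
    refine step1.trans ?_
    have sa : 1/(((a:ℝ)+1)*((a:ℝ)+2)) ≤ dd (a+2) := by
      unfold dd
      push_cast
      rw [div_le_div_iff₀ (by positivity) (by positivity)]
      have ha : (0:ℝ) ≤ (a:ℝ) := Nat.cast_nonneg a
      nlinarith
    have sc : 1/(((c:ℝ)+1)*((c:ℝ)+2)) ≤ dd (c+2) := by
      unfold dd
      push_cast
      rw [div_le_div_iff₀ (by positivity) (by positivity)]
      have hc : (0:ℝ) ≤ (c:ℝ) := Nat.cast_nonneg c
      nlinarith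
    linarith

lemma bb_le_18 (k p : ℕ) (hpk : p ≤ k) : bb k p ≤ 18 := by
  have h := bb_le k p hpk
  have h1 := dd_le_three p
  have h2 := dd_le_three (k - p)
  linarith

lemma sum_bb_le (k : ℕ) : ∑ p ∈ range (k+1), bb k p ≤ 36 := by
  have h1 : ∑ p ∈ range (k+1), bb k p ≤ ∑ p ∈ range (k+1), 3 * (dd p + dd (k - p)) := by
    apply sum_le_sum
    intro p hp
    exact bb_le k p (by simpa [Nat.lt_succ_iff] using hp)
  have h2 : ∑ p ∈ range (k+1), dd (k - p) = ∑ p ∈ range (k+1), dd p := by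
    have := Finset.sum_range_reflect dd (k+1)
    simpa [Nat.succ_sub_succ] using this
  have h3 := sum_dd_le (k+1)
  calc ∑ p ∈ range (k+1), bb k p ≤ ∑ p ∈ range (k+1), 3 * (dd p + dd (k - p)) := h1
    _ = 3 * (∑ p ∈ range (k+1), dd p + ∑ p ∈ range (k+1), dd (k - p)) := by
        rw [← sum_add_distrib, mul_sum]
    _ = 3 * (∑ p ∈ range (k+1), dd p + ∑ p ∈ range (k+1), dd p) := by rw [h2]
    _ ≤ 3 * (6 + 6) := by linarith
    _ = 36 := by norm_num

lemma weighted_cs {ι : Type*} (s : Finset ι) (c z : ι → ℝ) (hc : ∀ i ∈ s, 0 ≤ c i) :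
    (∑ i ∈ s, c i * z i)^2 ≤ (∑ i ∈ s, c i) * (∑ i ∈ s, c i * z i ^ 2) := by
  apply Finset.sum_sq_le_sum_mul_sum_of_sq_eq_mul s hc
    (fun i hi => mul_nonneg (hc i hi) (sq_nonneg _))
  intro i hi
  ring


lemma coeffid (k l p q : ℕ) :
    wt k l * (k.choose p : ℝ) * (l.choose q : ℝ)
      = (bb k p * bb l q) * (wt p q * wt (k-p) (l-q)) := by
  unfold wt bb
  have f1 : ((k-2).factorial : ℝ) ≠ 0 := by exact_mod_cast (k-2).factorial_ne_zero
  have f2 : ((l-2).factorial : ℝ) ≠ 0 := by exact_mod_cast (l-2).factorial_ne_zero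
  have f3 : ((p-2).factorial : ℝ) ≠ 0 := by exact_mod_cast (p-2).factorial_ne_zero
  have f4 : ((q-2).factorial : ℝ) ≠ 0 := by exact_mod_cast (q-2).factorial_ne_zero
  have f5 : ((k-p-2).factorial : ℝ) ≠ 0 := by exact_mod_cast (k-p-2).factorial_ne_zero
  have f6 : ((l-q-2).factorial : ℝ) ≠ 0 := by exact_mod_cast (l-q-2).factorial_ne_zero
  field_simp

lemma step1 (θ : ℝ) (hθ : 0 < θ) (U V W : ℕ → ℕ → ℝ)
    (hU : ∀ k l, 0 ≤ U k l) (hV : ∀ k l, 0 ≤ V k l) (hW : ∀ k l, 0 ≤ W k l)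
    (hL : ∀ k l, W k l ≤ ∑ p ∈ Finset.range (k + 1), ∑ q ∈ Finset.range (l + 1),
        (Nat.choose k p : ℝ) * (Nat.choose l q : ℝ) * U p q * V (k - p) (l - q))
    (k l : ℕ) :
    wt k l ^ 2 * θ ^ (k + 2*l) * W k l ^ 2
      ≤ 419904 * ∑ p ∈ range (k+1), ∑ q ∈ range (l+1),
          (wt p q ^ 2 * θ ^ (p + 2*q) * U p q ^ 2)
            * (wt (k-p) (l-q) ^ 2 * θ ^ ((k-p) + 2*(l-q)) * V (k-p) (l-q) ^ 2) := by
  set s : Finset (ℕ × ℕ) := range (k+1) ×ˢ range (l+1) with hs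
  set c : ℕ × ℕ → ℝ := fun i => bb k i.1 * bb l i.2 with hc
  set z : ℕ × ℕ → ℝ := fun i =>
    (wt i.1 i.2 * U i.1 i.2) * (wt (k-i.1) (l-i.2) * V (k-i.1) (l-i.2)) with hz
  have hcnn : ∀ i ∈ s, 0 ≤ c i := fun i _ => mul_nonneg (bb_nonneg _ _) (bb_nonneg _ _)
  have h1 : wt k l * W k l ≤ ∑ i ∈ s, c i * z i := by
    have h0 := mul_le_mul_of_nonneg_left (hL k l) (wt_pos k l).le
    refine h0.trans_eq ?_
    rw [hs, Finset.sum_product, Finset.mul_sum]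
    apply sum_congr rfl
    intro p _
    rw [Finset.mul_sum]
    apply sum_congr rfl
    intro q _
    have := coeffid k l p q
    simp only [hc, hz]
    linear_combination (U p q * V (k-p) (l-q)) * this
  have h2 : (0:ℝ) ≤ wt k l * W k l := mul_nonneg (wt_pos k l).le (hW k l)
  have h3 : (wt k l * W k l) ^ 2 ≤ (∑ i ∈ s, c i) * (∑ i ∈ s, c i * z i ^ 2) :=
    (pow_le_pow_left₀ h2 h1 2).trans (weighted_cs s c z hcnn)
  have h4 : ∑ i ∈ s, c i ≤ 1296 := by
    have : ∑ i ∈ s, c i = (∑ p ∈ range (k+1), bb k p) * (∑ q ∈ range (l+1), bb l q) := by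
      rw [hs, Finset.sum_product, hc, Finset.sum_mul_sum]
    rw [this]
    have hbk := sum_bb_le k
    have hbl := sum_bb_le l
    have hnk : (0:ℝ) ≤ ∑ p ∈ range (k+1), bb k p := sum_nonneg fun p _ => bb_nonneg _ _
    have hnl : (0:ℝ) ≤ ∑ q ∈ range (l+1), bb l q := sum_nonneg fun q _ => bb_nonneg _ _
    nlinarith
  have h5 : (0:ℝ) ≤ ∑ i ∈ s, c i * z i ^ 2 :=
    sum_nonneg fun i hi => mul_nonneg (hcnn i hi) (sq_nonneg _)
  have h6 : (wt k l * W k l) ^ 2 ≤ 1296 * ∑ i ∈ s, c i * z i ^ 2 := by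
    calc (wt k l * W k l) ^ 2 ≤ (∑ i ∈ s, c i) * (∑ i ∈ s, c i * z i ^ 2) := h3
      _ ≤ 1296 * ∑ i ∈ s, c i * z i ^ 2 := by
          apply mul_le_mul_of_nonneg_right h4 h5
  -- multiply by θ-power and split it
  have hθp : (0:ℝ) < θ ^ (k + 2*l) := pow_pos hθ _
  have h7 : θ ^ (k + 2*l) * (wt k l * W k l) ^ 2
      ≤ 1296 * ∑ i ∈ s, c i * (θ ^ (k + 2*l) * z i ^ 2) := by
    have := mul_le_mul_of_nonneg_left h6 hθp.le
    refine this.trans_eq ?_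
    rw [Finset.mul_sum, Finset.mul_sum, Finset.mul_sum]
    exact sum_congr rfl fun i _ => by ring
  have h8 : ∑ i ∈ s, c i * (θ ^ (k + 2*l) * z i ^ 2)
      ≤ 324 * ∑ p ∈ range (k+1), ∑ q ∈ range (l+1),
          (wt p q ^ 2 * θ ^ (p + 2*q) * U p q ^ 2)
            * (wt (k-p) (l-q) ^ 2 * θ ^ ((k-p) + 2*(l-q)) * V (k-p) (l-q) ^ 2) := by
    rw [← Finset.sum_product' (f := fun p q =>
      (wt p q ^ 2 * θ ^ (p + 2*q) * U p q ^ 2)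
        * (wt (k-p) (l-q) ^ 2 * θ ^ ((k-p) + 2*(l-q)) * V (k-p) (l-q) ^ 2)), ← hs,
      Finset.mul_sum]
    apply sum_le_sum
    intro i hi
    rw [hs, Finset.mem_product, Finset.mem_range, Finset.mem_range] at hi
    obtain ⟨hik, hil⟩ := hi
    have hik' : i.1 ≤ k := by omega
    have hil' : i.2 ≤ l := by omega
    have hsplit : θ ^ (k + 2*l) = θ ^ (i.1 + 2*i.2) * θ ^ ((k - i.1) + 2*(l - i.2)) := by
      rw [← pow_add]
      congr 1
      omega
    have hzz : θ ^ (k + 2*l) * z i ^ 2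
        = (wt i.1 i.2 ^ 2 * θ ^ (i.1 + 2*i.2) * U i.1 i.2 ^ 2)
            * (wt (k-i.1) (l-i.2) ^ 2 * θ ^ ((k-i.1) + 2*(l-i.2)) * V (k-i.1) (l-i.2) ^ 2) := by
      rw [hsplit, hz]
      ring
    rw [hzz]
    have hcb : c i ≤ 324 := by
      have b1 := bb_le_18 k i.1 hik'
      have b2 := bb_le_18 l i.2 hil'
      have n1 := bb_nonneg k i.1
      have n2 := bb_nonneg l i.2
      show bb k i.1 * bb l i.2 ≤ 324
      nlinarith
    have hterm : (0:ℝ) ≤ (wt i.1 i.2 ^ 2 * θ ^ (i.1 + 2*i.2) * U i.1 i.2 ^ 2)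
        * (wt (k-i.1) (l-i.2) ^ 2 * θ ^ ((k-i.1) + 2*(l-i.2)) * V (k-i.1) (l-i.2) ^ 2) := by
      positivity
    exact mul_le_mul_of_nonneg_right hcb hterm
  calc wt k l ^ 2 * θ ^ (k + 2*l) * W k l ^ 2
      = θ ^ (k + 2*l) * (wt k l * W k l) ^ 2 := by ring
    _ ≤ 1296 * ∑ i ∈ s, c i * (θ ^ (k + 2*l) * z i ^ 2) := h7
    _ ≤ 1296 * (324 * ∑ p ∈ range (k+1), ∑ q ∈ range (l+1),
          (wt p q ^ 2 * θ ^ (p + 2*q) * U p q ^ 2)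
            * (wt (k-p) (l-q) ^ 2 * θ ^ ((k-p) + 2*(l-q)) * V (k-p) (l-q) ^ 2)) := by
        linarith [h8]
    _ = 419904 * ∑ p ∈ range (k+1), ∑ q ∈ range (l+1),
          (wt p q ^ 2 * θ ^ (p + 2*q) * U p q ^ 2)
            * (wt (k-p) (l-q) ^ 2 * θ ^ ((k-p) + 2*(l-q)) * V (k-p) (l-q) ^ 2) := by
        ring

/-- Lemma 2 of the paper: there is a universal constant `C > 0` such that
whenever `θ > 0` and `(U_{k,l})`, `(V_{k,l})`, `(W_{k,l})` are families of nonnegative reals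
satisfying the Leibniz-type bound
`W_{k,l} ≤ ∑_{p=0}^k ∑_{q=0}^l binom(k,p) binom(l,q) U_{p,q} V_{k-p,l-q}`,
then, with `u_{k,l} = a_{k,l}^2 θ^{k+2l} U_{k,l}^2` (and similarly `v`, `w`), one has
`∑_{k+l ≤ N} w_{k,l} ≤ C (∑_{k+l ≤ N} u_{k,l}) (∑_{k+l ≤ N} v_{k,l})` for every `N`. -/

theorem weighted_sum_product_estimate :
    ∃ C : ℝ, 0 < C ∧ ∀ (θ : ℝ), 0 < θ → ∀ (U V W : ℕ → ℕ → ℝ),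
      (∀ k l, 0 ≤ U k l) → (∀ k l, 0 ≤ V k l) → (∀ k l, 0 ≤ W k l) →
      (∀ k l, W k l ≤ ∑ p ∈ Finset.range (k + 1), ∑ q ∈ Finset.range (l + 1),
          (Nat.choose k p : ℝ) * (Nat.choose l q : ℝ) * U p q * V (k - p) (l - q)) →
      ∀ N : ℕ,
        sumUpTo N (fun k l => wt k l ^ 2 * θ ^ (k + 2 * l) * W k l ^ 2)
          ≤ C * sumUpTo N (fun k l => wt k l ^ 2 * θ ^ (k + 2 * l) * U k l ^ 2)
              * sumUpTo N (fun k l => wt k l ^ 2 * θ ^ (k + 2 * l) * V k l ^ 2) := by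
  refine ⟨419904, by norm_num, fun θ hθ U V W hU hV hW hL N => ?_⟩
  simp only [sumUpTo_eq]
  have hun : ∀ p q : ℕ, (0:ℝ) ≤ wt p q ^ 2 * θ ^ (p + 2 * q) * U p q ^ 2 := fun p q =>
    mul_nonneg (mul_nonneg (sq_nonneg _) (pow_nonneg hθ.le _)) (sq_nonneg _)
  have hvn : ∀ p q : ℕ, (0:ℝ) ≤ wt p q ^ 2 * θ ^ (p + 2 * q) * V p q ^ 2 := fun p q =>
    mul_nonneg (mul_nonneg (sq_nonneg _) (pow_nonneg hθ.le _)) (sq_nonneg _)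
  calc ∑ x ∈ TT N, wt x.1 x.2 ^ 2 * θ ^ (x.1 + 2 * x.2) * W x.1 x.2 ^ 2
      ≤ ∑ x ∈ TT N, 419904 * ∑ p ∈ range (x.1+1), ∑ q ∈ range (x.2+1),
          (wt p q ^ 2 * θ ^ (p + 2*q) * U p q ^ 2)
            * (wt (x.1-p) (x.2-q) ^ 2 * θ ^ ((x.1-p) + 2*(x.2-q)) * V (x.1-p) (x.2-q) ^ 2) :=
        sum_le_sum fun x _ => step1 θ hθ U V W hU hV hW hL x.1 x.2
    _ = 419904 * ∑ x ∈ TT N, ∑ p ∈ range (x.1+1), ∑ q ∈ range (x.2+1),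
          (wt p q ^ 2 * θ ^ (p + 2*q) * U p q ^ 2)
            * (wt (x.1-p) (x.2-q) ^ 2 * θ ^ ((x.1-p) + 2*(x.2-q)) * V (x.1-p) (x.2-q) ^ 2) := by
        rw [← Finset.mul_sum]
    _ ≤ 419904 * ((∑ x ∈ TT N, wt x.1 x.2 ^ 2 * θ ^ (x.1 + 2 * x.2) * U x.1 x.2 ^ 2)
          * (∑ x ∈ TT N, wt x.1 x.2 ^ 2 * θ ^ (x.1 + 2 * x.2) * V x.1 x.2 ^ 2)) := by
        refine mul_le_mul_of_nonneg_left ?_ (by norm_num)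
        exact rearr N (fun p q => wt p q ^ 2 * θ ^ (p + 2 * q) * U p q ^ 2)
          (fun p q => wt p q ^ 2 * θ ^ (p + 2 * q) * V p q ^ 2) hun hvn
    _ = 419904 * (∑ x ∈ TT N, wt x.1 x.2 ^ 2 * θ ^ (x.1 + 2 * x.2) * U x.1 x.2 ^ 2)
          * (∑ x ∈ TT N, wt x.1 x.2 ^ 2 * θ ^ (x.1 + 2 * x.2) * V x.1 x.2 ^ 2) := by ring
end

section
/- There exists a universal constant C > 0 with the following property. Let θ > 0, let j ≥ 1 be an integer, let (U_{k,l}) be a family of nonnegative real numbers indexed by pairs of nonnegative integers, and let (W_{k,l}) be a family of nonnegative reals satisfying the j-fold Leibniz-type bound W_{k,l} ≤ ∑_{π,ρ} multinom(k;π) multinom(l;ρ) ∏_{i=1}^{j} U_{π_i,ρ_i}, where the sum is over all multi-indices π, ρ ∈ ℕ₀^j with |π| = k and |ρ| = l. Define u_{k,l} := a_{k,l}^2 θ^{k+2l} U_{k,l}^2 and w_{k,l} := a_{k,l}^2 θ^{k+2l} W_{k,l}^2. Then for every nonnegative integer N, ∑_{0 ≤ k+l ≤ N} w_{k,l} ≤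 C^j ( ∑_{0 ≤ k+l ≤ N} u_{k,l} )^j. -/
open Finset

/-- the Gevrey-type weight `(m-2)!/m!`. -/
noncomputable def gw (m : ℕ) : ℝ := (Nat.factorial (m - 2) : ℝ) / (Nat.factorial m : ℝ)

lemma gw_pos (m : ℕ) : 0 < gw m := by
  unfold gw
  positivity

lemma gw_le_one (m : ℕ) : gw m ≤ 1 := by
  unfold gw
  rw [div_le_one (by positivity)]
  exact_mod_cast Nat.factorial_le (Nat.sub_le m 2)

lemma gw_eq (n : ℕ) : gw (n + 2) = 1 / ((n + 2) * (n + 1) : ℝ) := by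
  unfold gw
  have : Nat.factorial (n + 2) = (n + 2) * ((n + 1) * Nat.factorial n) := rfl
  rw [this]
  simp only [Nat.add_sub_cancel]
  push_cast
  rw [div_eq_div_iff (by positivity) (by positivity)]
  ring

/-- key comparison: if `k ≤ 2 n` then `gw n ≤ 8 * gw k`. -/
lemma gw_key {k n : ℕ} (h : k ≤ 2 * n) : gw n ≤ 8 * gw k := by
  match n, k with
  | 0, k =>
    interval_cases k
    norm_num [gw]
  | 1, k =>
    interval_cases k <;> norm_num [gw, show (1:ℕ)-2 = 0 from rfl, Nat.factorial]
  | (n+2), 0 => nlinarith [gw_le_one (n+2), gw_pos (n+2), show gw 0 = 1 by norm_num [gw]]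
  | (n+2), 1 => nlinarith [gw_le_one (n+2), gw_pos (n+2), show gw 1 = 1 by norm_num [gw, Nat.factorial]]
  | (n+2), (k+2) =>
    rw [gw_eq, gw_eq]
    have hk : (k : ℝ) + 2 ≤ 2 * ((n:ℝ) + 2) := by exact_mod_cast h
    have h1 : (0:ℝ) ≤ n := by positivity
    have h2 : (0:ℝ) ≤ k := by positivity
    rw [mul_one_div, div_le_div_iff₀ (by positivity) (by positivity)]
    nlinarith

lemma gw_sum_le (k : ℕ) : ∑ m ∈ Finset.range (k + 1), gw m ≤ 3 := by
  have key : ∀ n : ℕ, ∑ m ∈ Finset.range (n + 2), gw m ≤ 3 - 1 / (n + 1 : ℝ) := by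
    intro n
    induction n with
    | zero =>
      norm_num [Finset.sum_range_succ, gw, Nat.factorial]
    | succ n ih =>
      rw [Finset.sum_range_succ]
      have h1 : gw (n + 1 + 1) = 1 / (((n:ℝ) + 2) * ((n:ℝ) + 1)) := gw_eq n
      have h2 : (0:ℝ) < (n:ℝ) + 1 := by positivity
      have h3 : (0:ℝ) < (n:ℝ) + 2 := by positivity
      have : 1 / (((n:ℝ) + 2) * ((n:ℝ) + 1)) = 1 / ((n:ℝ)+1) - 1/((n:ℝ)+2) := by
        field_simp; ring
      push_cast
      push_cast at ih
      rw [h1, this]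
      have h4 : 1 / ((n:ℝ) + 1 + 1) = 1 / ((n:ℝ) + 2) := by ring_nf
      linarith
  match k with
  | 0 => norm_num [gw]
  | (n+1) =>
    have := key n
    have h2 : (0:ℝ) < (n:ℝ) + 1 := by positivity
    have h3 : 1 / ((n:ℝ)+1) > 0 := by positivity
    linarith

/-- the two-fold convolution estimate. -/
lemma gw_conv (k : ℕ) : ∑ m ∈ Finset.range (k + 1), gw m * gw (k - m) ≤ 48 * gw k := by
  have hterm : ∀ m ∈ Finset.range (k + 1), gw m * gw (k - m) ≤ 8 * gw k * (gw m + gw (k - m)) := by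
    intro m hm
    rw [Finset.mem_range] at hm
    have hmk : m ≤ k := Nat.lt_succ_iff.mp hm
    rcases le_or_gt m (k - m) with hle | hlt
    · have hk2 : k ≤ 2 * (k - m) := by omega
      have := gw_key hk2
      have h1 := (gw_pos m).le
      have h2 := (gw_pos (k - m)).le
      nlinarith
    · have hk2 : k ≤ 2 * m := by omega
      have := gw_key hk2
      have h1 := (gw_pos m).le
      have h2 := (gw_pos (k - m)).le
      nlinarith
  calc ∑ m ∈ Finset.range (k + 1), gw m * gw (k - m)
      ≤ ∑ m ∈ Finset.range (k + 1), 8 * gw k * (gw m + gw (k - m)) :=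
        Finset.sum_le_sum hterm
    _ = 8 * gw k * ((∑ m ∈ Finset.range (k + 1), gw m) + ∑ m ∈ Finset.range (k + 1), gw (k - m)) := by
        rw [← Finset.mul_sum, Finset.sum_add_distrib]
    _ = 8 * gw k * ((∑ m ∈ Finset.range (k + 1), gw m) + ∑ m ∈ Finset.range (k + 1), gw m) := by
        have hre : ∑ m ∈ Finset.range (k + 1), gw (k - m) = ∑ m ∈ Finset.range (k + 1), gw m := by
          rw [← Finset.sum_range_reflect (fun m => gw m) (k + 1)]
          simp
        rw [hre]
    _ ≤ 8 * gw k * (3 + 3) := by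
        have := gw_sum_le k
        have hp := (gw_pos k).le
        nlinarith
    _ = 48 * gw k := by ring

lemma sum_antidiagonalTuple_succ {M : Type*} [AddCommMonoid M] (j k : ℕ)
    (f : (Fin (j + 1) → ℕ) → M) :
    ∑ π ∈ Finset.Nat.antidiagonalTuple (j + 1) k, f π
      = ∑ p ∈ Finset.HasAntidiagonal.antidiagonal k,
          ∑ τ ∈ Finset.Nat.antidiagonalTuple j p.2, f (Fin.cons p.1 τ) := by
  rw [Finset.sum_sigma']
  refine Finset.sum_bij' (fun π _ => ⟨(π 0, ∑ i, π (Fin.succ i)), Fin.tail π⟩)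
    (fun x _ => Fin.cons x.1.1 x.2) ?_ ?_ ?_ ?_ ?_
  · intro π hπ
    rw [Finset.Nat.mem_antidiagonalTuple] at hπ
    rw [Finset.mem_sigma]
    constructor
    · rw [Finset.HasAntidiagonal.mem_antidiagonal]
      dsimp only
      rw [← hπ, Fin.sum_univ_succ]
    · rw [Finset.Nat.mem_antidiagonalTuple]
      rfl
  · intro x hx
    rw [Finset.mem_sigma, Finset.HasAntidiagonal.mem_antidiagonal, Finset.Nat.mem_antidiagonalTuple] at hx
    rw [Finset.Nat.mem_antidiagonalTuple]
    rw [Fin.sum_univ_succ, Fin.cons_zero]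
    simp only [Fin.cons_succ]
    rw [hx.2, hx.1]
  · intro π hπ
    exact Fin.cons_self_tail π
  · intro x hx
    rw [Finset.mem_sigma, Finset.HasAntidiagonal.mem_antidiagonal, Finset.Nat.mem_antidiagonalTuple] at hx
    refine Sigma.ext ?_ (by dsimp only; exact heq_of_eq (Fin.tail_cons _ _))
    dsimp only
    rw [Fin.cons_zero]
    simp only [Fin.cons_succ]
    rw [hx.2]
  · intro π hπ
    exact congrArg f (Fin.cons_self_tail π).symm

lemma gw_tuple : ∀ j : ℕ, 1 ≤ j → ∀ k : ℕ,
    ∑ π ∈ Finset.Nat.antidiagonalTuple j k, ∏ i, gw (π i) ≤ 48 ^ (j - 1) * gw k := by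
  intro j
  induction j with
  | zero => omega
  | succ j ih =>
    intro hj k
    rcases Nat.eq_or_lt_of_le hj with h1 | h1
    · -- j + 1 = 1
      have hj0 : j = 0 := by omega
      subst hj0
      rw [Finset.Nat.antidiagonalTuple_one, Finset.sum_singleton]
      simp [Fin.prod_univ_one]
    · have hj1 : 1 ≤ j := by omega
      rw [sum_antidiagonalTuple_succ]
      have step : ∀ p ∈ Finset.HasAntidiagonal.antidiagonal k,
          (∑ τ ∈ Finset.Nat.antidiagonalTuple j p.2, ∏ i, gw ((Fin.cons p.1 τ : Fin (j+1) → ℕ) i))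
            ≤ gw p.1 * (48 ^ (j - 1) * gw p.2) := by
        intro p _
        have : ∀ τ : Fin j → ℕ, ∏ i, gw ((Fin.cons p.1 τ : Fin (j+1) → ℕ) i)
            = gw p.1 * ∏ i, gw (τ i) := by
          intro τ
          rw [Fin.prod_univ_succ, Fin.cons_zero]
          simp only [Fin.cons_succ]
        calc ∑ τ ∈ Finset.Nat.antidiagonalTuple j p.2, ∏ i, gw ((Fin.cons p.1 τ : Fin (j+1) → ℕ) i)
            = gw p.1 * ∑ τ ∈ Finset.Nat.antidiagonalTuple j p.2, ∏ i, gw (τ i) := by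
              rw [Finset.mul_sum]; exact Finset.sum_congr rfl fun τ _ => this τ
          _ ≤ gw p.1 * (48 ^ (j - 1) * gw p.2) := by
              have := ih hj1 p.2
              exact mul_le_mul_of_nonneg_left this (gw_pos p.1).le
      calc (∑ p ∈ Finset.HasAntidiagonal.antidiagonal k, ∑ τ ∈ Finset.Nat.antidiagonalTuple j p.2,
              ∏ i, gw ((Fin.cons p.1 τ : Fin (j+1) → ℕ) i))
          ≤ ∑ p ∈ Finset.HasAntidiagonal.antidiagonal k, gw p.1 * (48 ^ (j - 1) * gw p.2) :=
            Finset.sum_le_sum step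
        _ = 48 ^ (j - 1) * ∑ p ∈ Finset.HasAntidiagonal.antidiagonal k, gw p.1 * gw p.2 := by
            rw [Finset.mul_sum]; exact Finset.sum_congr rfl fun p _ => by ring
        _ = 48 ^ (j - 1) * ∑ m ∈ Finset.range (k + 1), gw m * gw (k - m) := by
            rw [Finset.Nat.sum_antidiagonal_eq_sum_range_succ_mk]
        _ ≤ 48 ^ (j - 1) * (48 * gw k) := by
            have := gw_conv k
            have : (0:ℝ) ≤ 48 ^ (j-1) := by positivity
            nlinarith [gw_conv k]
        _ ≤ 48 ^ (j + 1 - 1) * gw k := by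
            rw [show j + 1 - 1 = (j - 1) + 1 by omega, pow_succ]
            ring_nf
            rfl

/-- the square region as a filtered finset. -/
noncomputable def triReg (N : ℕ) : Finset (ℕ × ℕ) :=
  (Finset.range (N + 1) ×ˢ Finset.range (N + 1)).filter (fun p => p.1 + p.2 ≤ N)

lemma sumUpTo_eq_s9 (N : ℕ) (f : ℕ → ℕ → ℝ) :
    (∑ k ∈ Finset.range (N + 1), ∑ l ∈ Finset.range (N + 1 - k), f k l)
      = ∑ p ∈ triReg N, f p.1 p.2 := by
  rw [triReg, Finset.sum_filter, Finset.sum_product]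
  refine Finset.sum_congr rfl fun k hk => ?_
  rw [Finset.mem_range] at hk
  rw [← Finset.sum_filter]
  refine (Finset.sum_congr ?_ fun l _ => rfl).symm
  ext l
  simp only [Finset.mem_filter, Finset.mem_range]
  omega

lemma embed_le (j N : ℕ) (F : ℕ × ℕ → ℝ) (hF : ∀ p, 0 ≤ F p) :
    (∑ p ∈ triReg N, ∑ π ∈ Finset.Nat.antidiagonalTuple j p.1,
        ∑ ρ ∈ Finset.Nat.antidiagonalTuple j p.2, ∏ i, F (π i, ρ i))
      ≤ (∑ p ∈ triReg N, F p) ^ j := by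
  rw [Finset.sum_pow']
  have hflat : (∑ p ∈ triReg N, ∑ π ∈ Finset.Nat.antidiagonalTuple j p.1,
        ∑ ρ ∈ Finset.Nat.antidiagonalTuple j p.2, ∏ i, F (π i, ρ i))
      = ∑ x ∈ (triReg N).sigma (fun p =>
            Finset.Nat.antidiagonalTuple j p.1 ×ˢ Finset.Nat.antidiagonalTuple j p.2),
          ∏ i, F (x.2.1 i, x.2.2 i) := by
    rw [Finset.sum_sigma]
    exact Finset.sum_congr rfl fun p _ => by rw [Finset.sum_product]
  rw [hflat]
  set T := (triReg N).sigma (fun p : ℕ × ℕ =>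
      Finset.Nat.antidiagonalTuple j p.1 ×ˢ Finset.Nat.antidiagonalTuple j p.2) with hT
  set e : (_ : ℕ × ℕ) × ((Fin j → ℕ) × (Fin j → ℕ)) → (Fin j → ℕ × ℕ) :=
    fun x => fun i => (x.2.1 i, x.2.2 i) with he
  have hmemT : ∀ x ∈ T, (∑ i, x.2.1 i = x.1.1) ∧ (∑ i, x.2.2 i = x.1.2) ∧ x.1 ∈ triReg N := by
    intro x hx
    rw [hT, Finset.mem_sigma, Finset.mem_product] at hx
    obtain ⟨h1, h2, h3⟩ := hx
    rw [Finset.Nat.mem_antidiagonalTuple] at h2 h3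
    exact ⟨h2, h3, h1⟩
  have hinj : ∀ x ∈ T, ∀ y ∈ T, e x = e y → x = y := by
    intro x hx y hy hxy
    obtain ⟨hx1, hx2, _⟩ := hmemT x hx
    obtain ⟨hy1, hy2, _⟩ := hmemT y hy
    have h1 : x.2.1 = y.2.1 := funext fun i => congrArg Prod.fst (congrFun hxy i)
    have h2 : x.2.2 = y.2.2 := funext fun i => congrArg Prod.snd (congrFun hxy i)
    have h3 : x.1 = y.1 := by
      have := hx1; rw [h1, hy1] at this
      have h4 := hx2; rw [h2, hy2] at h4
      exact Prod.ext this.symm h4.symm |>.symm ▸ (Prod.ext this h4 : _)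
    refine Sigma.ext h3 ?_
    rw [Prod.ext h1 h2]
  have himg : ∑ x ∈ T, ∏ i, F (x.2.1 i, x.2.2 i) = ∑ q ∈ T.image e, ∏ i, F (q i) := by
    rw [Finset.sum_image hinj]
  rw [himg]
  refine Finset.sum_le_sum_of_subset_of_nonneg ?_ (fun q _ _ => Finset.prod_nonneg fun i _ => hF _)
  intro q hq
  rw [Finset.mem_image] at hq
  obtain ⟨x, hx, rfl⟩ := hq
  obtain ⟨h1, h2, h3⟩ := hmemT x hx
  rw [triReg, Finset.mem_filter, Finset.mem_product, Finset.mem_range, Finset.mem_range] at h3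
  rw [Fintype.mem_piFinset]
  intro i
  simp only [he]
  have ha : x.2.1 i ≤ x.1.1 := by
    rw [← h1]; exact Finset.single_le_sum (fun _ _ => Nat.zero_le _) (Finset.mem_univ i)
  have hb : x.2.2 i ≤ x.1.2 := by
    rw [← h2]; exact Finset.single_le_sum (fun _ _ => Nat.zero_le _) (Finset.mem_univ i)
  rw [triReg, Finset.mem_filter, Finset.mem_product, Finset.mem_range, Finset.mem_range]
  refine ⟨⟨?_, ?_⟩, ?_⟩ <;> omega

noncomputable def cc (k j : ℕ) (π : Fin j → ℕ) : ℝ :=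
  (Nat.multinomial Finset.univ π : ℝ) * ((Nat.factorial (k - 2) : ℝ))⁻¹
    * ∏ i, (Nat.factorial (π i - 2) : ℝ)

lemma cc_nonneg (k j : ℕ) (π : Fin j → ℕ) : 0 ≤ cc k j π := by
  unfold cc
  positivity

lemma cc_eq (j k : ℕ) (π : Fin j → ℕ) (hπ : ∑ i, π i = k) :
    cc k j π = (Nat.factorial k : ℝ) / (Nat.factorial (k - 2) : ℝ) * ∏ i, gw (π i) := by
  have hspec := Nat.multinomial_spec Finset.univ π
  rw [hπ] at hspec
  have hM : (∏ i, (Nat.factorial (π i) : ℝ)) * (Nat.multinomial Finset.univ π : ℝ)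
      = (Nat.factorial k : ℝ) := by exact_mod_cast congrArg (Nat.cast : ℕ → ℝ) hspec
  have hgw : ∏ i, gw (π i)
      = (∏ i, (Nat.factorial (π i - 2) : ℝ)) / ∏ i, (Nat.factorial (π i) : ℝ) := by
    rw [← Finset.prod_div_distrib]
    rfl
  have h1 : (∏ i, (Nat.factorial (π i) : ℝ)) ≠ 0 := by positivity
  have h2 : (Nat.factorial (k - 2) : ℝ) ≠ 0 := by positivity
  have hM' : (Nat.multinomial Finset.univ π : ℝ)
      = (Nat.factorial k : ℝ) / ∏ i, (Nat.factorial (π i) : ℝ) :=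
    (eq_div_iff h1).mpr (by linarith [hM])
  rw [cc, hgw, hM']
  field_simp

lemma cc_sum (j : ℕ) (hj : 1 ≤ j) (k : ℕ) :
    ∑ π ∈ Finset.Nat.antidiagonalTuple j k, cc k j π ≤ 48 ^ (j - 1) := by
  have h1 : ∀ π ∈ Finset.Nat.antidiagonalTuple j k,
      cc k j π = (Nat.factorial k : ℝ) / (Nat.factorial (k - 2) : ℝ) * ∏ i, gw (π i) :=
    fun π hπ => cc_eq j k π (Finset.Nat.mem_antidiagonalTuple.mp hπ)
  rw [Finset.sum_congr rfl h1, ← Finset.mul_sum]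
  have h2 : (Nat.factorial k : ℝ) / (Nat.factorial (k - 2) : ℝ) * gw k = 1 := by
    rw [gw]
    have := Nat.factorial_pos k
    have := Nat.factorial_pos (k - 2)
    field_simp
  have h3 := gw_tuple j hj k
  have h4 : (0:ℝ) ≤ (Nat.factorial k : ℝ) / (Nat.factorial (k - 2) : ℝ) := by positivity
  calc (Nat.factorial k : ℝ) / (Nat.factorial (k - 2) : ℝ)
        * ∑ π ∈ Finset.Nat.antidiagonalTuple j k, ∏ i, gw (π i)
      ≤ (Nat.factorial k : ℝ) / (Nat.factorial (k - 2) : ℝ) * (48 ^ (j - 1) * gw k) :=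
        mul_le_mul_of_nonneg_left h3 h4
    _ = 48 ^ (j - 1) * ((Nat.factorial k : ℝ) / (Nat.factorial (k - 2) : ℝ) * gw k) := by ring
    _ = 48 ^ (j - 1) := by rw [h2, mul_one]

lemma cc_sq_sum (j : ℕ) (hj : 1 ≤ j) (k : ℕ) :
    ∑ π ∈ Finset.Nat.antidiagonalTuple j k, cc k j π ^ 2 ≤ (48 ^ (j - 1) : ℝ) ^ 2 := by
  calc ∑ π ∈ Finset.Nat.antidiagonalTuple j k, cc k j π ^ 2
      ≤ (∑ π ∈ Finset.Nat.antidiagonalTuple j k, cc k j π) ^ 2 :=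
        Finset.sum_sq_le_sq_sum_of_nonneg fun π _ => cc_nonneg k j π
    _ ≤ (48 ^ (j - 1) : ℝ) ^ 2 := by
        have h := cc_sum j hj k
        have h0 : (0:ℝ) ≤ ∑ π ∈ Finset.Nat.antidiagonalTuple j k, cc k j π :=
          Finset.sum_nonneg fun π _ => cc_nonneg k j π
        exact pow_le_pow_left₀ h0 h 2

lemma point_eq (j k l : ℕ) (t : ℝ) (U : ℕ → ℕ → ℝ) (π ρ : Fin j → ℕ)
    (hπ : ∑ i, π i = k) (hρ : ∑ i, ρ i = l) :
    wt k l * t ^ (k + 2 * l)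
        * ((Nat.multinomial Finset.univ π : ℝ) * (Nat.multinomial Finset.univ ρ : ℝ)
            * ∏ i, U (π i) (ρ i))
      = cc k j π * cc l j ρ
          * ∏ i, (wt (π i) (ρ i) * t ^ (π i + 2 * ρ i) * U (π i) (ρ i)) := by
  have hsplit : ∏ i, (wt (π i) (ρ i) * t ^ (π i + 2 * ρ i) * U (π i) (ρ i))
      = (∏ i, wt (π i) (ρ i)) * (∏ i, t ^ (π i + 2 * ρ i)) * ∏ i, U (π i) (ρ i) := by
    rw [Finset.prod_mul_distrib, Finset.prod_mul_distrib]
  have htpow : ∏ i, t ^ (π i + 2 * ρ i) = t ^ (k + 2 * l) := by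
    rw [Finset.prod_pow_eq_pow_sum]
    congr 1
    rw [Finset.sum_add_distrib, hπ, ← Finset.mul_sum, hρ]
  have hwt : ∏ i, wt (π i) (ρ i)
      = (∏ i, (Nat.factorial (π i - 2) : ℝ))⁻¹ * (∏ i, (Nat.factorial (ρ i - 2) : ℝ))⁻¹ := by
    unfold wt
    rw [← Finset.prod_inv_distrib, ← Finset.prod_inv_distrib, ← Finset.prod_mul_distrib]
    exact Finset.prod_congr rfl fun i _ => by rw [mul_inv]
  have h1 : (∏ i, (Nat.factorial (π i - 2) : ℝ)) ≠ 0 := by positivity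
  have h2 : (∏ i, (Nat.factorial (ρ i - 2) : ℝ)) ≠ 0 := by positivity
  have h3 : (Nat.factorial (k - 2) : ℝ) ≠ 0 := by positivity
  have h4 : (Nat.factorial (l - 2) : ℝ) ≠ 0 := by positivity
  rw [hsplit, htpow, hwt, cc, cc, wt]
  field_simp

set_option maxHeartbeats 2000000 in
/-- the Remark following Lemma 2 of the paper: there is a universal constant
`C > 0` such that whenever `θ > 0`, `j ≥ 1`, and `(U_{k,l})`, `(W_{k,l})` are families of
nonnegative reals satisfying the `j`-fold Leibniz-type bound
`W_{k,l} ≤ ∑_{|π|=k, |ρ|=l} multinom(k;π) multinom(l;ρ) ∏_{i=1}^j U_{π_i,ρ_i}`,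
then, with `u_{k,l} = a_{k,l}^2 θ^{k+2l} U_{k,l}^2` and
`w_{k,l} = a_{k,l}^2 θ^{k+2l} W_{k,l}^2`, one has
`∑_{k+l ≤ N} w_{k,l} ≤ C^j (∑_{k+l ≤ N} u_{k,l})^j` for every `N`. -/
theorem weighted_sum_power_estimate :
    ∃ C : ℝ, 0 < C ∧ ∀ (θ : ℝ), 0 < θ → ∀ (j : ℕ), 1 ≤ j → ∀ (U W : ℕ → ℕ → ℝ),
      (∀ k l, 0 ≤ U k l) → (∀ k l, 0 ≤ W k l) →
      (∀ k l, W k l ≤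
          ∑ π ∈ Finset.Nat.antidiagonalTuple j k,
            ∑ ρ ∈ Finset.Nat.antidiagonalTuple j l,
              (Nat.multinomial Finset.univ π : ℝ) * (Nat.multinomial Finset.univ ρ : ℝ) *
                ∏ i : Fin j, U (π i) (ρ i)) →
      ∀ N : ℕ,
        sumUpTo N (fun k l => wt k l ^ 2 * θ ^ (k + 2 * l) * W k l ^ 2)
          ≤ C ^ j * sumUpTo N (fun k l => wt k l ^ 2 * θ ^ (k + 2 * l) * U k l ^ 2) ^ j := by
  refine ⟨48 ^ 4, by norm_num, ?_⟩
  intro θ hθ j hj U W hU hW hWb N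
  set sqt := Real.sqrt θ with ht
  have ht2 : sqt ^ 2 = θ := Real.sq_sqrt hθ.le
  have htn : (0:ℝ) ≤ sqt := Real.sqrt_nonneg θ
  have hwt : ∀ k l, 0 ≤ wt k l := by
    intro k l; unfold wt; positivity
  set F : ℕ × ℕ → ℝ := fun p => (wt p.1 p.2 * sqt ^ (p.1 + 2 * p.2) * U p.1 p.2) ^ 2 with hF
  have hFnn : ∀ p, 0 ≤ F p := fun p => sq_nonneg _
  -- identity : θ-power versus sqt-power squares
  have hsq : ∀ (k l : ℕ) (X : ℝ), wt k l ^ 2 * θ ^ (k + 2 * l) * X ^ 2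
      = (wt k l * sqt ^ (k + 2 * l) * X) ^ 2 := by
    intro k l X
    rw [← ht2, ← pow_mul, mul_comm 2 (k + 2 * l), pow_mul]
    ring
  -- pointwise estimate
  have hpoint : ∀ k l : ℕ, wt k l ^ 2 * θ ^ (k + 2 * l) * W k l ^ 2
      ≤ (48:ℝ) ^ (4 * (j - 1)) * ∑ π ∈ Finset.Nat.antidiagonalTuple j k,
          ∑ ρ ∈ Finset.Nat.antidiagonalTuple j l, ∏ i, F (π i, ρ i) := by
    intro k l
    have h1 : wt k l * sqt ^ (k + 2 * l) * W k l
        ≤ ∑ π ∈ Finset.Nat.antidiagonalTuple j k,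
            ∑ ρ ∈ Finset.Nat.antidiagonalTuple j l,
              cc k j π * cc l j ρ
                * ∏ i, (wt (π i) (ρ i) * sqt ^ (π i + 2 * ρ i) * U (π i) (ρ i)) := by
      have hmul : 0 ≤ wt k l * sqt ^ (k + 2 * l) := mul_nonneg (hwt k l) (pow_nonneg htn _)
      calc wt k l * sqt ^ (k + 2 * l) * W k l
          ≤ wt k l * sqt ^ (k + 2 * l) * (∑ π ∈ Finset.Nat.antidiagonalTuple j k,
              ∑ ρ ∈ Finset.Nat.antidiagonalTuple j l,
                (Nat.multinomial Finset.univ π : ℝ) * (Nat.multinomial Finset.univ ρ : ℝ) *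
                  ∏ i : Fin j, U (π i) (ρ i)) := by
            exact mul_le_mul_of_nonneg_left (hWb k l) hmul
        _ = ∑ π ∈ Finset.Nat.antidiagonalTuple j k,
              ∑ ρ ∈ Finset.Nat.antidiagonalTuple j l,
                cc k j π * cc l j ρ
                  * ∏ i, (wt (π i) (ρ i) * sqt ^ (π i + 2 * ρ i) * U (π i) (ρ i)) := by
            rw [Finset.mul_sum]
            refine Finset.sum_congr rfl fun π hπ => ?_
            rw [Finset.mul_sum]
            refine Finset.sum_congr rfl fun ρ hρ => ?_
            exact point_eq j k l sqt U π ρ (Finset.Nat.mem_antidiagonalTuple.mp hπ)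
              (Finset.Nat.mem_antidiagonalTuple.mp hρ)
    have h0 : 0 ≤ wt k l * sqt ^ (k + 2 * l) * W k l :=
      mul_nonneg (mul_nonneg (hwt k l) (pow_nonneg htn _)) (hW k l)
    rw [hsq k l (W k l)]
    have h2 := pow_le_pow_left₀ h0 h1 2
    refine h2.trans ?_
    -- Cauchy-Schwarz on the product finset
    have hcs : (∑ π ∈ Finset.Nat.antidiagonalTuple j k,
            ∑ ρ ∈ Finset.Nat.antidiagonalTuple j l,
              cc k j π * cc l j ρ
                * ∏ i, (wt (π i) (ρ i) * sqt ^ (π i + 2 * ρ i) * U (π i) (ρ i))) ^ 2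
        ≤ (∑ π ∈ Finset.Nat.antidiagonalTuple j k,
              ∑ ρ ∈ Finset.Nat.antidiagonalTuple j l, (cc k j π * cc l j ρ) ^ 2)
          * ∑ π ∈ Finset.Nat.antidiagonalTuple j k,
              ∑ ρ ∈ Finset.Nat.antidiagonalTuple j l,
                (∏ i, (wt (π i) (ρ i) * sqt ^ (π i + 2 * ρ i) * U (π i) (ρ i))) ^ 2 := by
      have key := Finset.sum_mul_sq_le_sq_mul_sq
          (Finset.Nat.antidiagonalTuple j k ×ˢ Finset.Nat.antidiagonalTuple j l)
          (fun x => cc k j x.1 * cc l j x.2)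
          (fun x => ∏ i, (wt (x.1 i) (x.2 i) * sqt ^ (x.1 i + 2 * x.2 i) * U (x.1 i) (x.2 i)))
      simp only [Finset.sum_product] at key
      convert key using 2 <;> ring
    refine hcs.trans ?_
    have hccsum : (∑ π ∈ Finset.Nat.antidiagonalTuple j k,
            ∑ ρ ∈ Finset.Nat.antidiagonalTuple j l, (cc k j π * cc l j ρ) ^ 2)
        ≤ (48:ℝ) ^ (4 * (j - 1)) := by
      have : (∑ π ∈ Finset.Nat.antidiagonalTuple j k,
            ∑ ρ ∈ Finset.Nat.antidiagonalTuple j l, (cc k j π * cc l j ρ) ^ 2)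
          = (∑ π ∈ Finset.Nat.antidiagonalTuple j k, cc k j π ^ 2)
            * (∑ ρ ∈ Finset.Nat.antidiagonalTuple j l, cc l j ρ ^ 2) := by
        rw [Finset.sum_mul_sum]
        exact Finset.sum_congr rfl fun π _ => Finset.sum_congr rfl fun ρ _ => by ring
      rw [this]
      have hk := cc_sq_sum j hj k
      have hl := cc_sq_sum j hj l
      have hnk : (0:ℝ) ≤ ∑ π ∈ Finset.Nat.antidiagonalTuple j k, cc k j π ^ 2 :=
        Finset.sum_nonneg fun π _ => sq_nonneg _
      calc (∑ π ∈ Finset.Nat.antidiagonalTuple j k, cc k j π ^ 2)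
            * (∑ ρ ∈ Finset.Nat.antidiagonalTuple j l, cc l j ρ ^ 2)
          ≤ ((48:ℝ) ^ (j-1)) ^ 2 * ((48:ℝ) ^ (j-1)) ^ 2 := by
            exact mul_le_mul hk hl (Finset.sum_nonneg fun ρ _ => sq_nonneg _) (by positivity)
        _ = (48:ℝ) ^ (4 * (j - 1)) := by
            rw [← pow_add, ← pow_mul]
            ring_nf
    have hprodsq : ∀ (π ρ : Fin j → ℕ),
        (∏ i, (wt (π i) (ρ i) * sqt ^ (π i + 2 * ρ i) * U (π i) (ρ i))) ^ 2
          = ∏ i, F (π i, ρ i) := by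
      intro π ρ
      rw [← Finset.prod_pow]
    have hsum2 : (∑ π ∈ Finset.Nat.antidiagonalTuple j k,
          ∑ ρ ∈ Finset.Nat.antidiagonalTuple j l,
            (∏ i, (wt (π i) (ρ i) * sqt ^ (π i + 2 * ρ i) * U (π i) (ρ i))) ^ 2)
        = ∑ π ∈ Finset.Nat.antidiagonalTuple j k,
            ∑ ρ ∈ Finset.Nat.antidiagonalTuple j l, ∏ i, F (π i, ρ i) :=
      Finset.sum_congr rfl fun π _ => Finset.sum_congr rfl fun ρ _ => hprodsq π ρ
    rw [hsum2]
    have hnn2 : 0 ≤ ∑ π ∈ Finset.Nat.antidiagonalTuple j k,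
        ∑ ρ ∈ Finset.Nat.antidiagonalTuple j l, ∏ i, F (π i, ρ i) :=
      Finset.sum_nonneg fun π _ => Finset.sum_nonneg fun ρ _ =>
        Finset.prod_nonneg fun i _ => hFnn _
    exact mul_le_mul_of_nonneg_right hccsum hnn2
  -- now sum over the region
  unfold sumUpTo
  rw [sumUpTo_eq_s9, sumUpTo_eq_s9]
  have hUeq : ∀ p : ℕ × ℕ,
      wt p.1 p.2 ^ 2 * θ ^ (p.1 + 2 * p.2) * U p.1 p.2 ^ 2 = F p := fun p => hsq p.1 p.2 _
  calc ∑ p ∈ triReg N, wt p.1 p.2 ^ 2 * θ ^ (p.1 + 2 * p.2) * W p.1 p.2 ^ 2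
      ≤ ∑ p ∈ triReg N, (48:ℝ) ^ (4 * (j - 1)) * ∑ π ∈ Finset.Nat.antidiagonalTuple j p.1,
          ∑ ρ ∈ Finset.Nat.antidiagonalTuple j p.2, ∏ i, F (π i, ρ i) :=
        Finset.sum_le_sum fun p _ => hpoint p.1 p.2
    _ = (48:ℝ) ^ (4 * (j - 1)) * ∑ p ∈ triReg N, ∑ π ∈ Finset.Nat.antidiagonalTuple j p.1,
          ∑ ρ ∈ Finset.Nat.antidiagonalTuple j p.2, ∏ i, F (π i, ρ i) := by
        rw [Finset.mul_sum]
    _ ≤ (48:ℝ) ^ (4 * (j - 1)) * (∑ p ∈ triReg N, F p) ^ j := by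
        refine mul_le_mul_of_nonneg_left (embed_le j N F hFnn) (by positivity)
    _ ≤ ((48:ℝ) ^ 4) ^ j * (∑ p ∈ triReg N, F p) ^ j := by
        have hbase : (48:ℝ) ^ (4 * (j - 1)) ≤ (48:ℝ) ^ (4 * j) := by
          apply pow_le_pow_right₀ (by norm_num)
          omega
        have hpow : (0:ℝ) ≤ (∑ p ∈ triReg N, F p) ^ j :=
          pow_nonneg (Finset.sum_nonneg fun p _ => hFnn p) j
        rw [← pow_mul]
        exact mul_le_mul_of_nonneg_right hbase hpow
    _ = ((48:ℝ) ^ 4) ^ j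
          * (∑ p ∈ triReg N, wt p.1 p.2 ^ 2 * θ ^ (p.1 + 2 * p.2) * U p.1 p.2 ^ 2) ^ j := by
        rw [Finset.sum_congr rfl fun p _ => hUeq p]
end

section
/- Let n ≥ 1, C > 0, M > 0, δ > 0, and θ ≥ 0 be real numbers satisfying C θ^2 (1+δ) M ≤ δ. Let (x_{k,l}) and (f_{k,l}) be families of nonnegative real numbers indexed by pairs of nonnegative integers such that: x_{0,0} = n; x_{k,0} = 0 for every k ≥ 1; for all nonnegative integers k, l one has x_{k,l+1} ≤ C θ^2 ∑_{p+q=k} ∑_{r+s=l} x_{p,r} f_{q,s}; and ∑_{0 ≤ k+l ≤ N} f_{k,l} ≤ M for every nonnegative integer N. Then ∑_{0 ≤ k+l ≤ N} x_{k,l} ≤ (1+δ) n for every nonnegative integer N. -/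
/-- The triangle of pairs with sum at most `N`. -/
def triSet (N : ℕ) : Finset (ℕ × ℕ) :=
  (Finset.range (N + 1) ×ˢ Finset.range (N + 1)).filter (fun p => p.1 + p.2 ≤ N)

lemma sumUpTo_eq_triSet (N : ℕ) (g : ℕ → ℕ → ℝ) :
    sumUpTo N g = ∑ p ∈ triSet N, g p.1 p.2 := by
  rw [triSet, Finset.sum_filter, Finset.sum_product]
  unfold sumUpTo
  refine Finset.sum_congr rfl fun k hk => ?_
  rw [Finset.mem_range] at hk
  rw [← Finset.sum_filter]
  refine Finset.sum_congr ?_ fun _ _ => rfl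
  ext l
  simp only [Finset.mem_filter, Finset.mem_range]
  omega

lemma triSet_split (N : ℕ) (g : ℕ → ℕ → ℝ) :
    ∑ p ∈ triSet (N + 1), g p.1 p.2
      = (∑ k ∈ Finset.range (N + 2), g k 0) + ∑ p ∈ triSet N, g p.1 (p.2 + 1) := by
  rw [← Finset.sum_filter_add_sum_filter_not (triSet (N + 1)) (fun p => p.2 = 0)]
  congr 1
  · refine Finset.sum_nbij' (fun p => p.1) (fun k => (k, 0)) ?_ ?_ ?_ ?_ ?_
    · intro a ha
      simp only [triSet, Finset.mem_filter, Finset.mem_product, Finset.mem_range] at ha ⊢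
      omega
    · intro a ha
      simp only [triSet, Finset.mem_filter, Finset.mem_product, Finset.mem_range] at ha ⊢
      exact ⟨by omega, trivial⟩
    · intro a ha
      simp only [triSet, Finset.mem_filter, Finset.mem_product, Finset.mem_range] at ha
      obtain ⟨_, h2⟩ := ha
      exact Prod.ext rfl h2.symm
    · intro a _; rfl
    · intro a ha
      simp only [triSet, Finset.mem_filter] at ha
      rw [ha.2]
  · refine Finset.sum_nbij' (fun p => (p.1, p.2 - 1)) (fun p => (p.1, p.2 + 1)) ?_ ?_ ?_ ?_ ?_
    · intro a ha
      simp only [triSet, Finset.mem_filter, Finset.mem_product, Finset.mem_range] at ha ⊢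
      omega
    · intro a ha
      simp only [triSet, Finset.mem_filter, Finset.mem_product, Finset.mem_range] at ha ⊢
      omega
    · intro a ha
      simp only [triSet, Finset.mem_filter, Finset.mem_product, Finset.mem_range] at ha
      have : a.2 - 1 + 1 = a.2 := by omega
      exact Prod.ext rfl this
    · intro a _; rfl
    · intro a ha
      simp only [triSet, Finset.mem_filter, Finset.mem_product, Finset.mem_range] at ha
      have : a.2 - 1 + 1 = a.2 := by omega
      simp [this]

lemma conv_bound (N : ℕ) (x f : ℕ → ℕ → ℝ)
    (hx : ∀ k l, 0 ≤ x k l) (hf : ∀ k l, 0 ≤ f k l) :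
    ∑ p ∈ triSet N, ∑ pq ∈ Finset.HasAntidiagonal.antidiagonal p.1, ∑ rs ∈ Finset.HasAntidiagonal.antidiagonal p.2,
        x pq.1 rs.1 * f pq.2 rs.2
      ≤ (∑ a ∈ triSet N, x a.1 a.2) * (∑ b ∈ triSet N, f b.1 b.2) := by
  have hrw : ∀ p ∈ triSet N,
      (∑ pq ∈ Finset.HasAntidiagonal.antidiagonal p.1, ∑ rs ∈ Finset.HasAntidiagonal.antidiagonal p.2,
        x pq.1 rs.1 * f pq.2 rs.2)
      = ∑ w ∈ Finset.HasAntidiagonal.antidiagonal p.1 ×ˢ Finset.HasAntidiagonal.antidiagonal p.2,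
          x w.1.1 w.2.1 * f w.1.2 w.2.2 := by
    intro p _
    rw [Finset.sum_product]
  rw [Finset.sum_congr rfl hrw, Finset.sum_sigma']
  rw [Finset.sum_mul_sum]
  rw [← Finset.sum_product']
  set Q : Finset ((ℕ × ℕ) × ℕ × ℕ) :=
    (triSet N ×ˢ triSet N).filter
      (fun z => z.1.1 + z.1.2 + z.2.1 + z.2.2 ≤ N) with hQ
  have hmain :
      (∑ z ∈ (triSet N).sigma
          (fun p => Finset.HasAntidiagonal.antidiagonal p.1 ×ˢ Finset.HasAntidiagonal.antidiagonal p.2),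
        x z.2.1.1 z.2.2.1 * f z.2.1.2 z.2.2.2)
      = ∑ z ∈ Q, x z.1.1 z.1.2 * f z.2.1 z.2.2 := by
    refine Finset.sum_nbij'
      (fun z => ((z.2.1.1, z.2.2.1), (z.2.1.2, z.2.2.2)))
      (fun z => ⟨(z.1.1 + z.2.1, z.1.2 + z.2.2),
        ((z.1.1, z.2.1), (z.1.2, z.2.2))⟩) ?_ ?_ ?_ ?_ ?_
    · intro a ha
      simp only [Finset.mem_sigma, Finset.mem_product, Finset.HasAntidiagonal.mem_antidiagonal,
        triSet, Finset.mem_filter, Finset.mem_range, hQ] at ha ⊢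
      omega
    · intro a ha
      simp only [Finset.mem_sigma, Finset.mem_product, Finset.HasAntidiagonal.mem_antidiagonal,
        triSet, Finset.mem_filter, Finset.mem_range, hQ] at ha ⊢
      exact ⟨by omega, trivial, trivial⟩
    · intro a ha
      simp only [Finset.mem_sigma, Finset.mem_product, Finset.HasAntidiagonal.mem_antidiagonal,
        triSet, Finset.mem_filter, Finset.mem_range] at ha
      obtain ⟨⟨_, hp⟩, ⟨h1, h2⟩⟩ := ha
      obtain ⟨⟨k, l⟩, ⟨⟨p, q⟩, ⟨r, s⟩⟩⟩ := a
      simp only [Finset.HasAntidiagonal.mem_antidiagonal] at h1 h2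
      subst h1; subst h2; rfl
    · intro a _; rfl
    · intro a _; rfl
  rw [hmain]
  refine Finset.sum_le_sum_of_subset_of_nonneg (Finset.filter_subset _ _) ?_
  intro z _ _
  exact mul_nonneg (hx _ _) (hf _ _)

/-- abstract form of Lemma `invmetbounds` of the paper: if
`C θ² (1+δ) M ≤ δ` and `(x_{k,l})`, `(f_{k,l})` are nonnegative families with `x_{0,0} = n`,
`x_{k,0} = 0` for `k ≥ 1`, satisfying the recursion
`x_{k,l+1} ≤ C θ² ∑_{p+q=k} ∑_{r+s=l} x_{p,r} f_{q,s}` and the bound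
`∑_{k+l ≤ N} f_{k,l} ≤ M` for all `N`, then `∑_{k+l ≤ N} x_{k,l} ≤ (1+δ) n` for all `N`. -/
theorem inverse_metric_inductive_bound (n C M δ θ : ℝ)
    (hn : 1 ≤ n) (hC : 0 < C) (hM : 0 < M) (hδ : 0 < δ) (hθ : 0 ≤ θ)
    (hsmall : C * θ ^ 2 * (1 + δ) * M ≤ δ)
    (x f : ℕ → ℕ → ℝ)
    (hx : ∀ k l, 0 ≤ x k l) (hf : ∀ k l, 0 ≤ f k l)
    (hx00 : x 0 0 = n) (hxk0 : ∀ k, 1 ≤ k → x k 0 = 0)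
    (hrec : ∀ k l, x k (l + 1) ≤
      C * θ ^ 2 * ∑ pq ∈ Finset.HasAntidiagonal.antidiagonal k, ∑ rs ∈ Finset.HasAntidiagonal.antidiagonal l,
        x pq.1 rs.1 * f pq.2 rs.2)
    (hfM : ∀ N : ℕ, sumUpTo N f ≤ M) :
    ∀ N : ℕ, sumUpTo N x ≤ (1 + δ) * n := by
  have hn0 : 0 < n := lt_of_lt_of_le one_pos hn
  have hCθ : 0 ≤ C * θ ^ 2 := mul_nonneg hC.le (sq_nonneg θ)
  intro N
  induction N with
  | zero =>
    have : sumUpTo 0 x = x 0 0 := by simp [sumUpTo]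
    rw [this, hx00]
    nlinarith
  | succ N ih =>
    have hS0 : 0 ≤ sumUpTo N x := by
      rw [sumUpTo_eq_triSet]
      exact Finset.sum_nonneg fun p _ => hx _ _
    have hstep : sumUpTo (N + 1) x ≤ n + C * θ ^ 2 * (sumUpTo N x * M) := by
      rw [sumUpTo_eq_triSet, triSet_split]
      have h1 : (∑ k ∈ Finset.range (N + 2), x k 0) = n := by
        rw [Finset.sum_eq_single 0]
        · exact hx00
        · intro k _ hk; exact hxk0 k (by omega)
        · intro h; exact absurd (Finset.mem_range.mpr (by omega)) h
      rw [h1]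
      have h2 : (∑ p ∈ triSet N, x p.1 (p.2 + 1))
          ≤ C * θ ^ 2 * (sumUpTo N x * M) := by
        calc (∑ p ∈ triSet N, x p.1 (p.2 + 1))
            ≤ ∑ p ∈ triSet N, C * θ ^ 2 *
                ∑ pq ∈ Finset.HasAntidiagonal.antidiagonal p.1, ∑ rs ∈ Finset.HasAntidiagonal.antidiagonal p.2,
                  x pq.1 rs.1 * f pq.2 rs.2 :=
              Finset.sum_le_sum fun p _ => hrec p.1 p.2
          _ = C * θ ^ 2 * ∑ p ∈ triSet N,
                ∑ pq ∈ Finset.HasAntidiagonal.antidiagonal p.1, ∑ rs ∈ Finset.HasAntidiagonal.antidiagonal p.2,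
                  x pq.1 rs.1 * f pq.2 rs.2 := by rw [Finset.mul_sum]
          _ ≤ C * θ ^ 2 * ((∑ a ∈ triSet N, x a.1 a.2) * (∑ b ∈ triSet N, f b.1 b.2)) :=
              mul_le_mul_of_nonneg_left (conv_bound N x f hx hf) hCθ
          _ ≤ C * θ ^ 2 * (sumUpTo N x * M) := by
              rw [← sumUpTo_eq_triSet, ← sumUpTo_eq_triSet]
              exact mul_le_mul_of_nonneg_left
                (mul_le_mul_of_nonneg_left (hfM N) hS0) hCθ
      linarith
    have : C * θ ^ 2 * (sumUpTo N x * M) ≤ C * θ ^ 2 * ((1 + δ) * n * M) := by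
      apply mul_le_mul_of_nonneg_left _ hCθ
      exact mul_le_mul_of_nonneg_right ih hM.le
    calc sumUpTo (N + 1) x ≤ n + C * θ ^ 2 * (sumUpTo N x * M) := hstep
      _ ≤ n + C * θ ^ 2 * ((1 + δ) * n * M) := by linarith
      _ = n + (C * θ ^ 2 * (1 + δ) * M) * n := by ring
      _ ≤ n + δ * n := by nlinarith
      _ = (1 + δ) * n := by ring
end
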